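/- Let G be a finite simple graph, λ > 0, X ⊆ V(G) a subset of vertices, and I ⊆ X an independent set of G. Then ∑_{K ∈ 𝓘(G), K∩X = I} π_{G,λ}(K) ≤ λ^{|I|} · Z_{G−X}(λ) / Z_G(λ), where G−X is the subgraph of G induced by V(G) \ X. -/

import Mathlib

open Finset

section HardCoreDefs

variable {V : Type*} [Fintype V] [DecidableEq V]

/-- `I` is an independent set of the simple graph `G`. -/
def IsIndep (G : SimpleGraph V) (I : Finset V) : Prop :=
  ∀ u ∈ I, ∀ v ∈ I, ¬ G.Adj u v

open Classical in
/-- The set `𝓘(G)` of independent sets of `G`. -/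
noncomputable def indepSets (G : SimpleGraph V) : Finset (Finset V) :=
  Finset.univ.filter fun I => IsIndep G I

/-- The hard-core partition function `Z_G(λ)`. -/
noncomputable def Z (G : SimpleGraph V) (lam : ℝ) : ℝ :=
  ∑ I ∈ indepSets G, lam ^ I.card

/-- The hard-core distribution `π_{G,λ}`. -/
noncomputable def hardCore (G : SimpleGraph V) (lam : ℝ) (I : Finset V) : ℝ :=
  lam ^ I.card / Z G lam

open Classical in
/-- The transition probabilities of the Glauber dynamics on independent sets of `G`
with fugacity `λ`. -/
noncomputable def glauberP (G : SimpleGraph V) (lam : ℝ) (I J : Finset V) : ℝ :=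
  (1 / (Fintype.card V : ℝ)) * ∑ v : V,
    if v ∈ I then
      (if J = I.erase v then 1 / (lam + 1) else if J = I then lam / (lam + 1) else 0)
    else if IsIndep G (insert v I) then
      (if J = insert v I then lam / (lam + 1) else if J = I then 1 / (lam + 1) else 0)
    else (if J = I then 1 else 0)

/-- One step of the Glauber dynamics, applied to a distribution on independent sets. -/
noncomputable def stepDist (G : SimpleGraph V) (lam : ℝ) (μ : Finset V → ℝ) :
    Finset V → ℝ :=
  fun J => ∑ I ∈ indepSets G, μ I * glauberP G lam I J

/-- The distribution of the Glauber dynamics after `t` steps started from `I`. -/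
noncomputable def distAfter (G : SimpleGraph V) (lam : ℝ) (I : Finset V) (t : ℕ) :
    Finset V → ℝ :=
  (stepDist G lam)^[t] (fun J => if J = I then 1 else 0)

/-- Total variation distance between two distributions on independent sets. -/
noncomputable def tvDist (G : SimpleGraph V) (μ ν : Finset V → ℝ) : ℝ :=
  (1 / 2) * ∑ I ∈ indepSets G, |μ I - ν I|

/-- The mixing time `τ_{G,λ}` of the Glauber dynamics. -/
noncomputable def mixingTime (G : SimpleGraph V) (lam : ℝ) : ℕ :=
  sInf {t : ℕ | ∀ I ∈ indepSets G,
    tvDist G (distAfter G lam I t) (hardCore G lam) ≤ 1 / 4}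

/-- `λ̃ = e^{|ln λ|} = max (λ, 1/λ)`. -/
noncomputable def lamTilde (lam : ℝ) : ℝ := max lam lam⁻¹

/-- The independence number of the subgraph of `G` induced by `S`. -/
noncomputable def alphaOn (G : SimpleGraph V) (S : Finset V) : ℕ :=
  ((indepSets G).filter fun I => I ⊆ S).sup Finset.card

/-- The number of independent sets of the subgraph of `G` induced by `S`. -/
noncomputable def numIndepOn (G : SimpleGraph V) (S : Finset V) : ℕ :=
  ((indepSets G).filter fun I => I ⊆ S).card

/-- The subgraph of `G` induced by a finite vertex set `S`. -/
def inducedF (G : SimpleGraph V) (S : Finset V) : SimpleGraph {x : V // x ∈ S} :=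
  SimpleGraph.comap Subtype.val G

end HardCoreDefs

open Classical in
/-- Let `G` be a finite simple graph, `λ > 0`, `X ⊆ V(G)` and `I ⊆ X` an
independent set of `G`. Then `∑_{K ∈ 𝓘(G), K ∩ X = I} π_{G,λ}(K) ≤ λ^{|I|} Z_{G-X}(λ) / Z_G(λ)`,
where `G - X` is the subgraph of `G` induced by `V(G) \ X`. -/
theorem statement_11 (V : Type) [Fintype V] [DecidableEq V] (G : SimpleGraph V)
    (lam : ℝ) (hlam : 0 < lam) (X I : Finset V) (hIX : I ⊆ X) (hI : IsIndep G I) :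
    ∑ K ∈ (indepSets G).filter (fun K => K ∩ X = I), hardCore G lam K ≤
      lam ^ I.card * Z (inducedF G (Finset.univ \ X)) lam / Z G lam := by
  classical
  have hZpos : 0 < Z G lam := by
    have h0 : (∅ : Finset V) ∈ indepSets G := by
      rw [indepSets, Finset.mem_filter]; exact ⟨Finset.mem_univ _, fun u hu => by simp at hu⟩
    have h1 : (0:ℝ) < lam ^ (∅ : Finset V).card := by positivity
    show (0:ℝ) < ∑ J ∈ indepSets G, lam ^ J.card
    exact h1.trans_le (Finset.single_le_sum (f := fun J => lam ^ J.card)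
      (fun i _ => by positivity) h0)
  set A := (indepSets G).filter (fun K => K ∩ X = I) with hA
  have key : ∑ K ∈ A, lam ^ K.card
      ≤ lam ^ I.card * Z (inducedF G (Finset.univ \ X)) lam := by
    have hsplit : ∀ K ∈ A, lam ^ K.card = lam ^ I.card * lam ^ (K \ X).card := by
      intro K hK
      rw [hA, Finset.mem_filter] at hK
      rw [← pow_add]
      congr 1
      rw [← hK.2, Finset.card_inter_add_card_sdiff]
    rw [Finset.sum_congr rfl hsplit, ← Finset.mul_sum]
    apply mul_le_mul_of_nonneg_left _ (by positivity)
    set f : Finset V → Finset {x : V // x ∈ Finset.univ \ X} :=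
      fun K => (K \ X).subtype _ with hf
    have hfilt : ∀ K : Finset V, (K \ X).filter (fun x => x ∈ Finset.univ \ X) = K \ X := by
      intro K
      apply Finset.filter_true_of_mem
      intro x hx
      simp [Finset.mem_sdiff] at hx ⊢
      exact hx.2
    have hcard : ∀ K : Finset V, (f K).card = (K \ X).card := by
      intro K
      rw [hf]
      simp only [Finset.card_subtype, hfilt]
    have hmap : ∀ K : Finset V,
        (f K).map (Function.Embedding.subtype _) = K \ X := by
      intro K
      rw [hf]
      simp only [Finset.subtype_map, hfilt]
    have hinj : Set.InjOn f A := by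
      intro K hK K' hK' hEq
      simp only [hA, Finset.mem_coe, Finset.mem_filter] at hK hK'
      have h1 : K \ X = K' \ X := by
        rw [← hmap K, ← hmap K', hEq]
      have h2 : K = I ∪ (K \ X) := by
        rw [← hK.2]
        ext x
        simp only [Finset.mem_union, Finset.mem_inter, Finset.mem_sdiff]
        tauto
      have h3 : K' = I ∪ (K' \ X) := by
        rw [← hK'.2]
        ext x
        simp only [Finset.mem_union, Finset.mem_inter, Finset.mem_sdiff]
        tauto
      rw [h2, h3, h1]
    have hsub : A.image f ⊆ indepSets (inducedF G (Finset.univ \ X)) := by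
      intro J hJ
      rw [Finset.mem_image] at hJ
      obtain ⟨K, hK, rfl⟩ := hJ
      rw [hA, Finset.mem_filter] at hK
      have hKind : IsIndep G K := by simpa [indepSets] using hK.1
      simp only [indepSets, Finset.mem_filter, Finset.mem_univ, true_and]
      intro u hu v hv hadj
      rw [hf, Finset.mem_subtype] at hu hv
      have : G.Adj u.val v.val := hadj
      exact hKind u.val (Finset.mem_sdiff.mp hu).1 v.val (Finset.mem_sdiff.mp hv).1 this
    calc ∑ K ∈ A, lam ^ (K \ X).card
        = ∑ J ∈ A.image f, lam ^ J.card := by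
          rw [Finset.sum_image hinj]
          exact Finset.sum_congr rfl fun K _ => by rw [hcard]
      _ ≤ Z (inducedF G (Finset.univ \ X)) lam :=
          Finset.sum_le_sum_of_subset_of_nonneg hsub (fun i _ _ => by positivity)
  simp only [hardCore]
  rw [← Finset.sum_div]
  gcongr
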